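/- For every p ∈ (0,1) and ε > 0 there exists k₀ such that for every integer k ≥ k₀, every integer n with n ≥ k³/6, and every r with 0 ≤ r ≤ k−1: if X is a binomial random variable with parameters n and p, then the probability that X ≡ r (mod k) differs from 1/k by at most ε/k. -/

import Mathlib

open Finset

-- orthogonality
lemma sum_omega_pow (k : ℕ) (hk : k ≠ 0) (m : ℕ) :
    ∑ j ∈ Finset.range k, Complex.exp (2 * Real.pi * Complex.I / k) ^ (j * m) =
      if k ∣ m then (k : ℂ) else 0 := by
  have hprim := Complex.isPrimitiveRoot_exp k hk
  set ω := Complex.exp (2 * Real.pi * Complex.I / k) with hω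
  have hjm : ∀ j, ω ^ (j * m) = (ω ^ m) ^ j := fun j => by rw [mul_comm, pow_mul]
  simp_rw [hjm]
  by_cases hd : k ∣ m
  · rw [if_pos hd]
    have h1 : ω ^ m = 1 := (hprim.pow_eq_one_iff_dvd m).mpr hd
    simp [h1]
  · rw [if_neg hd, geom_sum_eq (fun h => hd ((hprim.pow_eq_one_iff_dvd m).mp h))]
    rw [← pow_mul, mul_comm m k, pow_mul, hprim.pow_eq_one, one_pow, sub_self, zero_div]

lemma abs_q_add_p_exp (p : ℝ) (θ : ℝ) :
    ‖(((1 - p : ℝ) : ℂ) + (p : ℂ) * Complex.exp ((θ : ℂ) * Complex.I))‖ ^ 2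
      = 1 - 2 * p * (1 - p) * (1 - Real.cos θ) := by
  rw [← Complex.normSq_eq_norm_sq, Complex.exp_mul_I]
  simp [Complex.normSq_apply, Complex.cos_ofReal_re, Complex.sin_ofReal_re]
  linear_combination p ^ 2 * Real.sin_sq_add_cos_sq θ

lemma cos_bound {k j : ℕ} (hk : 7 ≤ k) (hj0 : j ≠ 0) (hjk : j < k) :
    Real.cos (2 * Real.pi * j / k) ≤ 1 - 4 / (k : ℝ) ^ 2 := by
  have hkpos : (0:ℝ) < k := by positivity
  have hπ := Real.pi_gt_three
  have hπ4 := Real.pi_le_four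
  have hj1 : (1:ℝ) ≤ j := by exact_mod_cast Nat.one_le_iff_ne_zero.mpr hj0
  have hjk' : (j:ℝ) ≤ k - 1 := by
    have : (j:ℝ) + 1 ≤ k := by exact_mod_cast hjk
    linarith
  have hk7 : (7:ℝ) ≤ k := by exact_mod_cast hk
  -- step 1 : cos (2πj/k) ≤ cos (2π/k)
  have hstep1 : Real.cos (2 * Real.pi * j / k) ≤ Real.cos (2 * Real.pi / k) := by
    have hπpos := Real.pi_pos
    rcases le_or_gt (2 * Real.pi * j / k) Real.pi with h | h
    · apply Real.cos_le_cos_of_nonneg_of_le_pi (by positivity) h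
      calc 2 * Real.pi / (k:ℝ) = 2 * Real.pi * 1 / k := by ring
        _ ≤ 2 * Real.pi * j / k := by gcongr
    · rw [← Real.cos_two_pi_sub]
      have hub : 2 * Real.pi * j / (k:ℝ) ≤ 2 * Real.pi * ((k:ℝ) - 1) / k := by gcongr
      have heq : 2 * Real.pi * ((k:ℝ) - 1) / k = 2 * Real.pi - 2 * Real.pi / k := by
        field_simp
      apply Real.cos_le_cos_of_nonneg_of_le_pi (by positivity) (by linarith)
      linarith
  -- step 2 : cos (2π/k) ≤ 1 - 4/k²
  refine hstep1.trans ?_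
  have h2 : Real.cos (2 * Real.pi / k) = 1 - 2 * Real.sin (Real.pi / k) ^ 2 := by
    have : 2 * Real.pi / k = 2 * (Real.pi / k) := by ring
    rw [this, Real.cos_two_mul, Real.cos_sq']
    ring
  rw [h2]
  have ht0 : 0 < Real.pi / k := by positivity
  have ht1 : Real.pi / k ≤ 1 := by rw [div_le_one hkpos]; linarith
  have hsin : Real.pi / k - (Real.pi / k) ^ 3 / 4 < Real.sin (Real.pi / k) := by
    have := Real.sin_gt_sub_cube ht0
    nlinarith [pow_pos ht0 3]
  have hsin2 : 2 / k ≤ Real.sin (Real.pi / k) := by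
    have h47 : Real.pi / k ≤ 4 / 7 := by
      rw [div_le_div_iff₀ hkpos (by norm_num)]; nlinarith
    have : Real.pi / k - (Real.pi / k) ^ 3 / 4 ≥ (Real.pi / k) * (1 - (4/7)^2 / 4) := by
      nlinarith [sq_nonneg (Real.pi / k)]
    have h3k : 3 / (k:ℝ) ≤ Real.pi / k := by gcongr
    have hkinv : (0:ℝ) ≤ 1 / k := by positivity
    have e1 : 3 / (k:ℝ) = 3 * (1/k) := by ring
    have e2 : 2 / (k:ℝ) = 2 * (1/k) := by ring
    linarith
  have he : 4 / (k:ℝ) ^ 2 = (2 / k) * (2 / k) := by ring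
  have := mul_self_le_mul_self (by positivity : (0:ℝ) ≤ 2 / k) hsin2
  nlinarith [this]

lemma dvd_iff_mod (k r : ℕ) (hk : k ≠ 0) (hr : r < k) (x : ℕ) :
    (k ∣ x + (k - r)) ↔ x % k = r := by
  haveI : NeZero k := ⟨hk⟩
  rw [← ZMod.natCast_eq_zero_iff]
  push_cast [Nat.cast_sub hr.le]
  rw [ZMod.natCast_self]
  constructor
  · intro h
    have : (x : ZMod k) = (r : ZMod k) := by
      have := congrArg (· + (r : ZMod k)) h
      simpa [add_assoc, sub_add_cancel] using this
    rw [ZMod.natCast_eq_natCast_iff'] at this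
    rwa [Nat.mod_eq_of_lt hr] at this
  · intro h
    have : (x : ZMod k) = (r : ZMod k) := by
      rw [ZMod.natCast_eq_natCast_iff', Nat.mod_eq_of_lt hr, h]
    rw [this]; ring

lemma key_identity (p : ℝ) (k n r : ℕ) (hk : k ≠ 0) (hr : r < k) :
    ∑ j ∈ Finset.range k,
        Complex.exp (2 * Real.pi * Complex.I / k) ^ (j * (k - r)) *
          ((1 - (p : ℂ)) + (p : ℂ) * Complex.exp (2 * Real.pi * Complex.I / k) ^ j) ^ n
      = (k : ℂ) * ∑ x ∈ Finset.range (n + 1),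
          (if x % k = r then (n.choose x : ℂ) * (p : ℂ) ^ x * (1 - (p : ℂ)) ^ (n - x)
           else 0) := by
  set ω := Complex.exp (2 * Real.pi * Complex.I / k) with hω
  have hterm : ∀ j ∈ Finset.range k,
      ω ^ (j * (k - r)) * ((1 - (p : ℂ)) + (p : ℂ) * ω ^ j) ^ n
        = ∑ x ∈ Finset.range (n + 1),
            (n.choose x : ℂ) * (p : ℂ) ^ x * (1 - (p : ℂ)) ^ (n - x)
              * ω ^ (j * (x + (k - r))) := by
    intro j _
    rw [add_comm (1 - (p : ℂ)), add_pow, Finset.mul_sum]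
    refine Finset.sum_congr rfl fun x _ => ?_
    have h1 : ((p : ℂ) * ω ^ j) ^ x = (p : ℂ) ^ x * ω ^ (j * x) := by
      rw [mul_pow, ← pow_mul]
    have h2 : ω ^ (j * (k - r)) * ω ^ (j * x) = ω ^ (j * (x + (k - r))) := by
      rw [← pow_add]; congr 1; ring
    rw [h1, ← h2]; ring
  rw [Finset.sum_congr rfl hterm, Finset.sum_comm, Finset.mul_sum]
  refine Finset.sum_congr rfl fun x _ => ?_
  rw [← Finset.mul_sum, sum_omega_pow k hk (x + (k - r))]
  simp only [dvd_iff_mod k r hk hr x]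
  split_ifs <;> ring

/-- For `p ∈ (0,1)` and `ε > 0` there exists `k₀` such that for all
`k ≥ k₀`, all `n ≥ k³/6` and all `0 ≤ r ≤ k-1`, a binomial random variable `X` with
parameters `n` and `p` satisfies `|ℙ(X ≡ r mod k) - 1/k| ≤ ε/k`. -/
theorem binomial_mod_uniform :
    ∀ p ε : ℝ, 0 < p → p < 1 → 0 < ε →
      ∃ k₀ : ℕ, ∀ k : ℕ, k₀ ≤ k → ∀ n r : ℕ,
        (k : ℝ) ^ 3 / 6 ≤ (n : ℝ) → r < k →
        |(∑ x ∈ Finset.range (n + 1),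
            if x % k = r then (n.choose x : ℝ) * p ^ x * (1 - p) ^ (n - x) else 0) -
          1 / (k : ℝ)| ≤ ε / (k : ℝ) := by
  intro p ε hp hp1 hε
  have hq : 0 < 1 - p := by linarith
  set c : ℝ := 2 * (p * (1 - p)) / 3 with hc
  have hcpos : 0 < c := by positivity
  have h1 : Filter.Tendsto (fun x : ℝ => x ^ 1 * Real.exp (-x)) Filter.atTop (nhds 0) :=
    Real.tendsto_pow_mul_exp_neg_atTop_nhds_zero 1
  have h2 : Filter.Tendsto (fun m : ℕ => c * m) Filter.atTop Filter.atTop :=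
    Filter.Tendsto.const_mul_atTop hcpos tendsto_natCast_atTop_atTop
  have h3 := (h1.comp h2).const_mul (1 / c)
  rw [mul_zero] at h3
  have h4 : ∀ᶠ m : ℕ in Filter.atTop,
      (1 / c) * ((c * m) ^ 1 * Real.exp (-(c * m))) < ε := by
    exact h3.eventually_lt_const hε
  obtain ⟨k₁, hk₁⟩ := Filter.eventually_atTop.mp h4
  refine ⟨max k₁ 7, fun k hk n r hn hr => ?_⟩
  have hk7 : 7 ≤ k := le_trans (le_max_right _ _) hk
  have hkk₁ : k₁ ≤ k := le_trans (le_max_left _ _) hk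
  have hkexp : (k : ℝ) * Real.exp (-(c * k)) < ε := by
    have := hk₁ k hkk₁
    have he : (1 / c) * ((c * k) ^ 1 * Real.exp (-(c * k)))
        = (k : ℝ) * Real.exp (-(c * k)) := by
      field_simp
    linarith [he ▸ this]
  -- main part
  have hk0 : k ≠ 0 := by omega
  have hkpos : (0:ℝ) < k := by exact_mod_cast Nat.pos_of_ne_zero hk0
  have hkC : (k : ℂ) ≠ 0 := Nat.cast_ne_zero.mpr hk0
  set ω := Complex.exp (2 * Real.pi * Complex.I / k) with hω
  set S : ℝ := ∑ x ∈ Finset.range (n + 1),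
      if x % k = r then (n.choose x : ℝ) * p ^ x * (1 - p) ^ (n - x) else 0 with hS
  set T : ℂ := ∑ j ∈ Finset.range k,
      ω ^ (j * (k - r)) * ((1 - (p : ℂ)) + (p : ℂ) * ω ^ j) ^ n with hT
  have hkey : T = (k : ℂ) * (S : ℂ) := by
    rw [hT, key_identity p k n r hk0 hr, hS]
    congr 1
    push_cast [Complex.ofReal_sum]
    refine Finset.sum_congr rfl fun x _ => ?_
    split_ifs <;> push_cast <;> ring
  -- omega facts
  have hω2 : ω = Complex.exp (((2 * Real.pi / k : ℝ) : ℂ) * Complex.I) := by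
    rw [hω]; congr 1; push_cast; ring
  have habsω : ∀ m : ℕ, ‖ω ^ m‖ = 1 := by
    intro m
    rw [norm_pow, hω2, Complex.norm_exp_ofReal_mul_I, one_pow]
  have hωj : ∀ j : ℕ, ω ^ j = Complex.exp (((2 * Real.pi * j / k : ℝ) : ℂ) * Complex.I) := by
    intro j
    rw [hω2, ← Complex.exp_nat_mul]; congr 1; push_cast; ring
  -- per-term bound
  have hjbound : ∀ j ∈ (Finset.range k).erase 0,
      ‖ω ^ (j * (k - r)) * ((1 - (p : ℂ)) + (p : ℂ) * ω ^ j) ^ n‖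
        ≤ Real.exp (-(c * k)) := by
    intro j hj
    obtain ⟨hj0, hjk⟩ := Finset.mem_erase.mp hj
    rw [Finset.mem_range] at hjk
    rw [norm_mul, habsω, one_mul, norm_pow]
    set θ : ℝ := 2 * Real.pi * j / k with hθ
    have habs2 : ‖(1 - (p : ℂ)) + (p : ℂ) * ω ^ j‖ ^ 2
        = 1 - 2 * p * (1 - p) * (1 - Real.cos θ) := by
      rw [hωj j, show ((1 : ℂ) - p) = ((1 - p : ℝ) : ℂ) by push_cast; ring]
      exact abs_q_add_p_exp p θ
    have hcos := cos_bound hk7 hj0 hjk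
    have hpq : (0 : ℝ) < p * (1 - p) := by positivity
    -- abs ≤ exp(-(4pq/k²))
    have hE : ‖(1 - (p : ℂ)) + (p : ℂ) * ω ^ j‖
        ≤ Real.exp (-(4 * (p * (1 - p)) / k ^ 2)) := by
      have hEsq : Real.exp (-(4 * (p * (1 - p)) / k ^ 2)) ^ 2
          = Real.exp (-(8 * (p * (1 - p)) / k ^ 2)) := by
        rw [sq, ← Real.exp_add]; congr 1; ring
      have hsq : ‖(1 - (p : ℂ)) + (p : ℂ) * ω ^ j‖ ^ 2
          ≤ Real.exp (-(4 * (p * (1 - p)) / k ^ 2)) ^ 2 := by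
        rw [habs2, hEsq]
        have hmul := mul_le_mul_of_nonneg_left
          (show 4 / (k : ℝ) ^ 2 ≤ 1 - Real.cos θ by linarith) (by positivity : (0:ℝ) ≤ 2 * p * (1 - p))
        have hle : 1 - 8 * (p * (1 - p)) / k ^ 2 ≤ Real.exp (-(8 * (p * (1 - p)) / k ^ 2)) :=
          Real.one_sub_le_exp_neg _
        have he2 : 2 * p * (1 - p) * (4 / (k : ℝ) ^ 2) = 8 * (p * (1 - p)) / k ^ 2 := by ring
        linarith
      have h0 : (0 : ℝ) ≤ ‖(1 - (p : ℂ)) + (p : ℂ) * ω ^ j‖ := norm_nonneg _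
      calc ‖(1 - (p : ℂ)) + (p : ℂ) * ω ^ j‖
          = Real.sqrt (‖(1 - (p : ℂ)) + (p : ℂ) * ω ^ j‖ ^ 2) := (Real.sqrt_sq h0).symm
        _ ≤ Real.sqrt (Real.exp (-(4 * (p * (1 - p)) / k ^ 2)) ^ 2) := Real.sqrt_le_sqrt hsq
        _ = Real.exp (-(4 * (p * (1 - p)) / k ^ 2)) := Real.sqrt_sq (Real.exp_pos _).le
    calc ‖(1 - (p : ℂ)) + (p : ℂ) * ω ^ j‖ ^ n
        ≤ Real.exp (-(4 * (p * (1 - p)) / k ^ 2)) ^ n :=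
          pow_le_pow_left₀ (norm_nonneg _) hE n
      _ = Real.exp ((n : ℝ) * (-(4 * (p * (1 - p)) / k ^ 2))) := (Real.exp_nat_mul _ n).symm
      _ ≤ Real.exp (-(c * k)) := by
          rw [Real.exp_le_exp]
          have h6 : (4 * (p * (1 - p)) / (k : ℝ) ^ 2) * ((k : ℝ) ^ 3 / 6) = c * k := by
            rw [hc]; field_simp; ring
          have h7 := mul_le_mul_of_nonneg_left hn
            (by positivity : (0:ℝ) ≤ 4 * (p * (1 - p)) / (k : ℝ) ^ 2)
          nlinarith
  -- sum bound
  have hT1 : T - 1 = ∑ j ∈ (Finset.range k).erase 0,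
      ω ^ (j * (k - r)) * ((1 - (p : ℂ)) + (p : ℂ) * ω ^ j) ^ n := by
    rw [hT, ← Finset.sum_erase_add _ _ (Finset.mem_range.mpr (Nat.pos_of_ne_zero hk0))]
    have h0term : ω ^ (0 * (k - r)) * ((1 - (p : ℂ)) + (p : ℂ) * ω ^ 0) ^ n = 1 := by
      rw [zero_mul, pow_zero]
      have h9 : (1 : ℂ) - p + p * 1 = 1 := by ring
      rw [h9, one_pow, one_mul]
    rw [h0term]
    ring
  have habsT : ‖T - 1‖ ≤ (k : ℝ) * Real.exp (-(c * k)) := by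
    rw [hT1]
    refine le_trans (norm_sum_le _ _) ?_
    refine le_trans (Finset.sum_le_sum hjbound) ?_
    rw [Finset.sum_const, nsmul_eq_mul,
      Finset.card_erase_of_mem (Finset.mem_range.mpr (Nat.pos_of_ne_zero hk0)),
      Finset.card_range]
    have hcard : ((k - 1 : ℕ) : ℝ) ≤ (k : ℝ) := by
      have := Nat.sub_le k 1
      exact_mod_cast Nat.cast_le.mpr this
    exact mul_le_mul_of_nonneg_right hcard (Real.exp_pos _).le
  -- finish
  have hfinal : |S - 1 / (k : ℝ)| = ‖T - 1‖ / k := by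
    rw [← Real.norm_eq_abs, ← Complex.norm_real]
    push_cast
    rw [show ((S : ℂ) - 1 / (k : ℂ)) = (T - 1) / (k : ℂ) by rw [hkey]; field_simp]
    rw [norm_div, Complex.norm_natCast]
  rw [hfinal]
  gcongr
  exact le_trans habsT hkexp.le
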